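/- arXiv:2101.01384 — 2 statements merged into one kernel-verified Lean document; each statement's English description precedes it below -/
import Mathlib

section
/- Let u₁ ∈ ℂ. The polynomial f₀ = x³ + y⁹ + u₁x²y³ has an isolated singularity at the origin (i.e., the only common zero in ℂ² of ∂f₀/∂x = 3x² + 2u₁xy³ and ∂f₀/∂y = 9y⁸ + 3u₁x²y² is the origin) if and only if 4u₁³ + 27 ≠ 0. -/
/-- `x^3 + y^9 + u₁ x^2 y^3` (J₁₆) has an isolated singularity at the origin iff
`4u₁³ + 27 ≠ 0`. -/
theorem J16_isolated_singularity_iff (u₁ : ℂ) :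
    (∀ x y : ℂ, 3 * x ^ 2 + 2 * u₁ * x * y ^ 3 = 0 ∧
        9 * y ^ 8 + 3 * u₁ * x ^ 2 * y ^ 2 = 0 → x = 0 ∧ y = 0) ↔
      4 * u₁ ^ 3 + 27 ≠ 0 := by
  constructor
  · intro h hne
    have := h (-2 * u₁ / 3) 1 ⟨by ring, by linear_combination hne / 3⟩
    exact one_ne_zero this.2
  · intro hne x y ⟨h1, h2⟩
    rcases mul_eq_zero.mp (show x * (3 * x + 2 * u₁ * y ^ 3) = 0 by
        linear_combination h1) with hx | hL
    · subst hx
      have hy : y ^ 8 = 0 := by linear_combination h2 / 9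
      exact ⟨rfl, pow_eq_zero_iff (by norm_num) |>.mp hy⟩
    · have hy8 : y ^ 8 * (4 * u₁ ^ 3 + 27) = 0 := by
        linear_combination 3 * h2 + u₁ * y ^ 2 * (2 * u₁ * y ^ 3 - 3 * x) * hL
      have hy : y = 0 := by
        have := (mul_eq_zero.mp hy8).resolve_right hne
        exact pow_eq_zero_iff (by norm_num) |>.mp this
      subst hy
      have hx : x = 0 := by
        have : (3 : ℂ) * x = 0 := by linear_combination hL
        simpa using this
      exact ⟨hx, rfl⟩
end

section
/- Let u₁, u₂ ∈ ℂ with u₁·(27u₁⁴ + 256u₂) ≠ 0, and let f = x³ + xz² + y⁵ + u₁y²z² + u₂y³z². Then the only point of ℂ³ at which f, ∂f/∂x, ∂f/∂y, ∂f/∂z all vanish is the origin (0,0,0). -/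
/-- For generic parameters `u₁(27u₁⁴ + 256u₂) ≠ 0`, the singular locus of the U₁₆
deformation `f = x³ + xz² + y⁵ + u₁y²z² + u₂y³z²` is just the origin. -/
theorem U16_generic_singular_locus (u₁ u₂ : ℂ)
    (h : u₁ * (27 * u₁ ^ 4 + 256 * u₂) ≠ 0) :
    ∀ x y z : ℂ,
      x ^ 3 + x * z ^ 2 + y ^ 5 + u₁ * y ^ 2 * z ^ 2 + u₂ * y ^ 3 * z ^ 2 = 0 →
      3 * x ^ 2 + z ^ 2 = 0 →
      5 * y ^ 4 + 2 * u₁ * y * z ^ 2 + 3 * u₂ * y ^ 2 * z ^ 2 = 0 →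
      2 * x * z + 2 * u₁ * y ^ 2 * z + 2 * u₂ * y ^ 3 * z = 0 →
      x = 0 ∧ y = 0 ∧ z = 0 := by
  intro x y z h1 h2 h3 h4
  by_cases hz : z = 0
  · subst hz
    have hx : x = 0 := by
      have hx2 : x ^ 2 = 0 := by linear_combination h2 / 3
      exact sq_eq_zero_iff.1 hx2
    subst hx
    have hy : y = 0 := by
      have hy4 : y ^ 4 = 0 := by linear_combination h3 / 5
      exact pow_eq_zero_iff (by norm_num) |>.1 hy4
    exact ⟨rfl, hy, rfl⟩
  · exfalso
    -- from ∂f/∂z = 0 and z ≠ 0, solve for x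
    have hx : x = -(y ^ 2 * (u₁ + u₂ * y)) := by
      have h4' : (2 * z) * (x + y ^ 2 * (u₁ + u₂ * y)) = 0 := by linear_combination h4
      rcases mul_eq_zero.1 h4' with h' | h'
      · exact absurd (by linear_combination h' / 2) hz
      · linear_combination h'
    subst hx
    by_cases hy : y = 0
    · subst hy
      have : z ^ 2 = 0 := by linear_combination h2
      exact hz (sq_eq_zero_iff.1 this)
    · -- key relation A : y (u₁ + u₂ y)³ = 1
      have hA : y * (u₁ + u₂ * y) ^ 3 = 1 := by
        have h5 : y ^ 5 * (y * (u₁ + u₂ * y) ^ 3 - 1) = 0 := by linear_combination -h1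
        rcases mul_eq_zero.1 h5 with h' | h'
        · exact absurd (pow_eq_zero_iff (by norm_num) |>.1 h') hy
        · linear_combination h'
      have hz2 : z ^ 2 = -3 * (y ^ 2 * (u₁ + u₂ * y)) ^ 2 := by linear_combination h2
      -- key relation B : 3 u₂ y² (u₁ + u₂ y)² = -1
      have hB : 3 * u₂ * y ^ 2 * (u₁ + u₂ * y) ^ 2 = -1 := by
        have h6 : y ^ 4 * (5 - 3 * y * (u₁ + u₂ * y) ^ 2 * (2 * u₁ + 3 * u₂ * y)) = 0 := by
          linear_combination h3 - (2 * u₁ * y + 3 * u₂ * y ^ 2) * hz2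
        have hB0 : 5 - 3 * y * (u₁ + u₂ * y) ^ 2 * (2 * u₁ + 3 * u₂ * y) = 0 := by
          rcases mul_eq_zero.1 h6 with h' | h'
          · exact absurd (pow_eq_zero_iff (by norm_num) |>.1 h') hy
          · exact h'
        linear_combination -hB0 - 6 * hA
      -- deduce the discriminant relation
      have hc : u₁ * y * (u₁ + u₂ * y) ^ 2 = 4 / 3 := by
        linear_combination hA - (1 / 3) * hB
      have hc2 : u₁ ^ 2 * y ^ 2 * (u₁ + u₂ * y) ^ 4 = 16 / 9 := by
        linear_combination (u₁ * y * (u₁ + u₂ * y) ^ 2 + 4 / 3) * hc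
      have h7 : u₁ ^ 2 * y * (u₁ + u₂ * y) = 16 / 9 := by
        linear_combination hc2 - u₁ ^ 2 * y * (u₁ + u₂ * y) * hA
      have h8 : u₁ ^ 4 * y ^ 2 * (u₁ + u₂ * y) ^ 2 = 256 / 81 := by
        linear_combination (u₁ ^ 2 * y * (u₁ + u₂ * y) + 16 / 9) * h7
      have key : 27 * u₁ ^ 4 + 256 * u₂ = 0 := by
        linear_combination 27 * u₁ ^ 4 * hB - 81 * u₂ * h8
      exact h (by rw [key, mul_zero])
end
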